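/- Let G be a graph, c a proper k-colouring of G, and let c_1, c_2 be distinct proper k-colourings each obtained from c by a non-trivial Kempe swap (a Kempe swap changing the colours of at least two vertices). Then c_1 and c_2 are not related by a single Kempe swap; i.e., the set of neighbours of c in K_k(G) reached by non-trivial Kempe swaps forms an independent set in K_k(G). -/

import Mathlib

/-- A proper `k`-colouring of `G`: adjacent vertices receive distinct colours. -/
def ProperColoring {V : Type*} (G : SimpleGraph V) {k : ℕ} (c : V → Fin k) : Prop :=
  ∀ ⦃x y : V⦄, G.Adj x y → c x ≠ c y

/-- The subgraph of `G` induced by the vertices coloured `a` or `b` under `c`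
(as a graph on all of `V`). -/
def kempeGraph {V : Type*} (G : SimpleGraph V) {k : ℕ} (c : V → Fin k) (a b : Fin k) :
    SimpleGraph V where
  Adj x y := G.Adj x y ∧ (c x = a ∨ c x = b) ∧ (c y = a ∨ c y = b)
  symm := ⟨fun x y ⟨h, hx, hy⟩ => ⟨h.symm, hy, hx⟩⟩
  loopless := ⟨fun x ⟨h, _, _⟩ => G.loopless.irrefl x h⟩

open Classical in
/-- The colouring obtained from `c` by the Kempe swap exchanging colours `a` and `b`
on the connected component of `v` in the subgraph induced by colours `a` and `b`. -/
noncomputable def kempeSwap {V : Type*} (G : SimpleGraph V) {k : ℕ}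
    (c : V → Fin k) (a b : Fin k) (v : V) : V → Fin k :=
  fun x => if (kempeGraph G c a b).Reachable v x
    then (if c x = a then b else if c x = b then a else c x)
    else c x

/-- `d` is obtained from `c` by a single Kempe swap that actually changes the
colouring: adjacency in the Kempe-recolouring graph. -/
def KempeStep {V : Type*} (G : SimpleGraph V) {k : ℕ} (c d : V → Fin k) : Prop :=
  c ≠ d ∧ ∃ (a b : Fin k) (v : V), d = kempeSwap G c a b v

section Helpers
variable {V : Type*} (G : SimpleGraph V) {k : ℕ}

lemma kempeGraph_adj {c : V → Fin k} {a b : Fin k} {x y : V} :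
    (kempeGraph G c a b).Adj x y ↔
      G.Adj x y ∧ (c x = a ∨ c x = b) ∧ (c y = a ∨ c y = b) := Iff.rfl

lemma swap_eq_of_reach {c : V → Fin k} {a b : Fin k} {v x : V}
    (hr : (kempeGraph G c a b).Reachable v x) :
    kempeSwap G c a b v x = if c x = a then b else if c x = b then a else c x := by
  unfold kempeSwap
  rw [if_pos hr]

lemma swap_eq_of_not_reach {c : V → Fin k} {a b : Fin k} {v x : V}
    (hr : ¬ (kempeGraph G c a b).Reachable v x) :
    kempeSwap G c a b v x = c x := by
  unfold kempeSwap
  rw [if_neg hr]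

lemma walk_mem {c : V → Fin k} {a b : Fin k} :
    ∀ {v x : V}, (kempeGraph G c a b).Walk v x → (c v = a ∨ c v = b) →
      (c x = a ∨ c x = b) := by
  intro v x p
  induction p with
  | nil => exact id
  | cons h _ ih => exact fun _ => ih h.2.2

lemma reach_mem {c : V → Fin k} {a b : Fin k} {v x : V}
    (hv : c v = a ∨ c v = b) (hr : (kempeGraph G c a b).Reachable v x) :
    c x = a ∨ c x = b := by
  obtain ⟨p⟩ := hr
  exact walk_mem G p hv

lemma swap_changed {c : V → Fin k} {a b : Fin k} {v x : V}
    (h : kempeSwap G c a b v x ≠ c x) :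
    (kempeGraph G c a b).Reachable v x ∧ (c x = a ∨ c x = b) ∧ a ≠ b := by
  by_cases hr : (kempeGraph G c a b).Reachable v x
  · refine ⟨hr, ?_⟩
    rw [swap_eq_of_reach G hr] at h
    by_cases h1 : c x = a
    · rw [if_pos h1] at h
      exact ⟨Or.inl h1, fun e => h (by rw [h1]; exact e.symm)⟩
    · rw [if_neg h1] at h
      by_cases h2 : c x = b
      · rw [if_pos h2] at h
        exact ⟨Or.inr h2, fun e => h (by rw [h2]; exact e)⟩
      · rw [if_neg h2] at h
        exact absurd rfl h
  · rw [swap_eq_of_not_reach G hr] at h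
    exact absurd rfl h

lemma start_mem {c : V → Fin k} {a b : Fin k} {v x : V}
    (h : kempeSwap G c a b v x ≠ c x) : c v = a ∨ c v = b := by
  obtain ⟨hr, hx, hab⟩ := swap_changed G h
  by_contra hv
  obtain ⟨p⟩ := hr
  cases p with
  | nil =>
    exact hv hx
  | cons h' _ => exact hv h'.2.1

lemma changed_iff {c : V → Fin k} {a b : Fin k} {v : V}
    (hv : c v = a ∨ c v = b) (hab : a ≠ b) (x : V) :
    kempeSwap G c a b v x ≠ c x ↔ (kempeGraph G c a b).Reachable v x := by
  constructor
  · exact fun h => (swap_changed G h).1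
  · intro hr
    have hx := reach_mem G hv hr
    rw [swap_eq_of_reach G hr]
    rcases hx with h | h <;> simp [h, hab, Ne.symm hab]

lemma swap_mem_iff {c : V → Fin k} {a b : Fin k} {v x : V} :
    (kempeSwap G c a b v x = a ∨ kempeSwap G c a b v x = b) ↔ (c x = a ∨ c x = b) := by
  unfold kempeSwap
  split_ifs with h1 h2 h3 <;> simp_all

lemma kempeGraph_ext {c c' : V → Fin k} {a b a' b' : Fin k}
    (h : ∀ x, (c' x = a' ∨ c' x = b') ↔ (c x = a ∨ c x = b)) :
    kempeGraph G c' a' b' = kempeGraph G c a b := by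
  ext x y
  rw [kempeGraph_adj, kempeGraph_adj, h x, h y]

lemma exists_edge {H : SimpleGraph V} {x y : V} (hxy : x ≠ y) (h : H.Reachable x y) :
    ∃ p q, H.Adj p q ∧ H.Reachable x p ∧ H.Reachable x q := by
  obtain ⟨w⟩ := h
  cases w with
  | nil => exact absurd rfl hxy
  | cons h' _ => exact ⟨_, _, h', SimpleGraph.Reachable.refl x, h'.reachable⟩

lemma pair_eq {a b a' b' s t : Fin k} (hst : s ≠ t)
    (hs : s = a ∨ s = b) (ht : t = a ∨ t = b) (hs' : s = a' ∨ s = b') (ht' : t = a' ∨ t = b')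
    (hab : a ≠ b) (hab' : a' ≠ b') :
    (a = a' ∧ b = b') ∨ (a = b' ∧ b = a') := by
  rcases hs with rfl | rfl <;> rcases ht with rfl | rfl <;>
    first
      | exact absurd rfl hst
      | (rcases hs' with rfl | rfl <;> rcases ht' with rfl | rfl <;> simp_all)

lemma swapf_eq {a b a' b' : Fin k} (h : (a = a' ∧ b = b') ∨ (a = b' ∧ b = a')) (γ : Fin k) :
    (if γ = a then b else if γ = b then a else γ)
      = (if γ = a' then b' else if γ = b' then a' else γ) := by
  rcases h with ⟨rfl, rfl⟩ | ⟨rfl, rfl⟩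
  · rfl
  · by_cases h1 : γ = a <;> by_cases h2 : γ = b <;> simp_all

lemma swap_invol {a b : Fin k} (hab : a ≠ b) (γ : Fin k) :
    (if (if γ = a then b else if γ = b then a else γ) = a then b
      else if (if γ = a then b else if γ = b then a else γ) = b then a
      else (if γ = a then b else if γ = b then a else γ)) = γ := by
  by_cases h1 : γ = a <;> by_cases h2 : γ = b <;> simp_all [Ne.symm hab]

end Helpers

theorem stmt9 {V : Type*} (G : SimpleGraph V) (k : ℕ)
    (c : V → Fin k) (hc : ProperColoring G c)
    (c1 c2 : V → Fin k) (hc1 : ProperColoring G c1) (hc2 : ProperColoring G c2)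
    (h12 : c1 ≠ c2)
    (hstep1 : KempeStep G c c1) (hstep2 : KempeStep G c c2)
    -- each swap is non-trivial: it changes the colour of at least two vertices
    (hnt1 : ∃ x y : V, x ≠ y ∧ c1 x ≠ c x ∧ c1 y ≠ c y)
    (hnt2 : ∃ x y : V, x ≠ y ∧ c2 x ≠ c x ∧ c2 y ≠ c y) :
    ¬ KempeStep G c1 c2 := by
  rintro ⟨hne, α, β, w0, h3⟩
  obtain ⟨hne1, a1, b1, v1, h1⟩ := hstep1
  obtain ⟨hne2, a2, b2, v2, h2⟩ := hstep2
  have e1 : ∀ x, c1 x = kempeSwap G c a1 b1 v1 x := fun x => congrFun h1 x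
  have e2 : ∀ x, c2 x = kempeSwap G c a2 b2 v2 x := fun x => congrFun h2 x
  have e3 : ∀ x, c2 x = kempeSwap G c1 α β w0 x := fun x => congrFun h3 x
  -- facts about swap 1
  obtain ⟨x1, hx1⟩ := Function.ne_iff.mp hne1
  have hx1s : kempeSwap G c a1 b1 v1 x1 ≠ c x1 := by rw [← e1 x1]; exact hx1.symm
  obtain ⟨hr1, hm1, hab1⟩ := swap_changed G hx1s
  have hv1 : c v1 = a1 ∨ c v1 = b1 := start_mem G hx1s
  have hD1 : ∀ x, c1 x ≠ c x ↔ (kempeGraph G c a1 b1).Reachable v1 x := fun x => by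
    rw [e1 x]; exact changed_iff G hv1 hab1 x
  -- facts about swap 2
  obtain ⟨x2, hx2⟩ := Function.ne_iff.mp hne2
  have hx2s : kempeSwap G c a2 b2 v2 x2 ≠ c x2 := by rw [← e2 x2]; exact hx2.symm
  obtain ⟨hr2, hm2, hab2⟩ := swap_changed G hx2s
  have hv2 : c v2 = a2 ∨ c v2 = b2 := start_mem G hx2s
  -- facts about swap from c1 to c2
  obtain ⟨xD, hxD⟩ := Function.ne_iff.mp hne
  have hxDs : kempeSwap G c1 α β w0 xD ≠ c1 xD := by rw [← e3 xD]; exact hxD.symm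
  obtain ⟨hrD, hmD, hαβ⟩ := swap_changed G hxDs
  have hw0 : c1 w0 = α ∨ c1 w0 = β := start_mem G hxDs
  have hDD : ∀ x, c2 x ≠ c1 x ↔ (kempeGraph G c1 α β).Reachable w0 x := fun x => by
    rw [e3 x]; exact changed_iff G hw0 hαβ x
  by_cases hsub : ∀ x, c1 x ≠ c x → c2 x ≠ c1 x
  · -- every vertex changed by swap 1 is changed again by the swap from c1 to c2
    obtain ⟨xa, xb, hab, hca, hcb⟩ := hnt1
    have hra : (kempeGraph G c a1 b1).Reachable v1 xa := (hD1 xa).mp hca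
    have hrb : (kempeGraph G c a1 b1).Reachable v1 xb := (hD1 xb).mp hcb
    obtain ⟨p, q, hpq, hp, hq⟩ := exists_edge hab (hra.symm.trans hrb)
    have hrp : (kempeGraph G c a1 b1).Reachable v1 p := hra.trans hp
    have hrq : (kempeGraph G c a1 b1).Reachable v1 q := hra.trans hq
    have hcp : c1 p ≠ c p := (hD1 p).mpr hrp
    have hcq : c1 q ≠ c q := (hD1 q).mpr hrq
    have hGpq : G.Adj p q := hpq.1
    have hm1p : c1 p = a1 ∨ c1 p = b1 := by rw [e1 p]; exact (swap_mem_iff G).mpr hpq.2.1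
    have hm1q : c1 q = a1 ∨ c1 q = b1 := by rw [e1 q]; exact (swap_mem_iff G).mpr hpq.2.2
    have hc1pq : c1 p ≠ c1 q := hc1 hGpq
    have hDp : kempeSwap G c1 α β w0 p ≠ c1 p := by rw [← e3 p]; exact hsub p hcp
    have hDq : kempeSwap G c1 α β w0 q ≠ c1 q := by rw [← e3 q]; exact hsub q hcq
    obtain ⟨hrDp, hmDp, -⟩ := swap_changed G hDp
    obtain ⟨hrDq, hmDq, -⟩ := swap_changed G hDq
    have hpair : (α = a1 ∧ β = b1) ∨ (α = b1 ∧ β = a1) :=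
      pair_eq hc1pq hmDp hmDq hm1p hm1q hαβ hab1
    have hmemiff : ∀ γ : Fin k, (γ = α ∨ γ = β) ↔ (γ = a1 ∨ γ = b1) := by
      rcases hpair with ⟨rfl, rfl⟩ | ⟨rfl, rfl⟩
      · exact fun γ => Iff.rfl
      · exact fun γ => or_comm
    have hgeq : kempeGraph G c1 α β = kempeGraph G c a1 b1 :=
      kempeGraph_ext G (fun x => by rw [hmemiff (c1 x), e1 x]; exact swap_mem_iff G)
    have hv1ch : c1 v1 ≠ c v1 := (hD1 v1).mpr (SimpleGraph.Reachable.refl v1)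
    have hrv1 : (kempeGraph G c1 α β).Reachable w0 v1 := (hDD v1).mp (hsub v1 hv1ch)
    apply hne2
    funext x
    by_cases hx : (kempeGraph G c a1 b1).Reachable v1 x
    · have hwx : (kempeGraph G c1 α β).Reachable w0 x :=
        hrv1.trans (by rw [hgeq]; exact hx)
      rw [e3 x, swap_eq_of_reach G hwx, e1 x, swap_eq_of_reach G hx, swapf_eq hpair]
      exact (swap_invol hab1 (c x)).symm
    · have hwx : ¬ (kempeGraph G c1 α β).Reachable w0 x := fun h =>
        hx (by rw [← hgeq]; exact hrv1.symm.trans h)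
      rw [e3 x, swap_eq_of_not_reach G hwx, e1 x, swap_eq_of_not_reach G hx]
  · -- some vertex changed by swap 1 keeps its c1 colour in c2
    push_neg at hsub
    obtain ⟨y, hy1, hy2⟩ := hsub
    have hry1 : (kempeGraph G c a1 b1).Reachable v1 y := (hD1 y).mp hy1
    have hmy : c y = a1 ∨ c y = b1 := reach_mem G hv1 hry1
    have hy2' : c2 y ≠ c y := by rw [hy2]; exact hy1
    have hsy : kempeSwap G c a2 b2 v2 y ≠ c y := by rw [← e2 y]; exact hy2'
    obtain ⟨hry2, hmy2, -⟩ := swap_changed G hsy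
    have hm2y : c2 y = a2 ∨ c2 y = b2 := by rw [e2 y]; exact (swap_mem_iff G).mpr hmy2
    have hm1y : c2 y = a1 ∨ c2 y = b1 := by rw [hy2, e1 y]; exact (swap_mem_iff G).mpr hmy
    have hpair : (a1 = a2 ∧ b1 = b2) ∨ (a1 = b2 ∧ b1 = a2) :=
      pair_eq (Ne.symm hy2') hmy hm1y hmy2 hm2y hab1 hab2
    have hmemiff : ∀ γ : Fin k, (γ = a1 ∨ γ = b1) ↔ (γ = a2 ∨ γ = b2) := by
      rcases hpair with ⟨rfl, rfl⟩ | ⟨rfl, rfl⟩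
      · exact fun γ => Iff.rfl
      · exact fun γ => or_comm
    have hgeq : kempeGraph G c a2 b2 = kempeGraph G c a1 b1 :=
      kempeGraph_ext G (fun x => (hmemiff (c x)).symm)
    have hry2' : (kempeGraph G c a1 b1).Reachable v2 y := by rw [← hgeq]; exact hry2
    have hv12 : (kempeGraph G c a1 b1).Reachable v1 v2 := hry1.trans hry2'.symm
    apply h12
    funext x
    rw [e1 x, e2 x]
    by_cases hx : (kempeGraph G c a1 b1).Reachable v1 x
    · rw [swap_eq_of_reach G hx, swap_eq_of_reach G
        (show (kempeGraph G c a2 b2).Reachable v2 x by rw [hgeq]; exact hv12.symm.trans hx)]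
      exact swapf_eq hpair (c x)
    · rw [swap_eq_of_not_reach G hx, swap_eq_of_not_reach G
        (show ¬ (kempeGraph G c a2 b2).Reachable v2 x from fun h =>
          hx (hv12.trans (by rw [hgeq] at h; exact h)))]
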